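/- In G, for all integers x, y and all j ≥ 0, (a^x u^y v)^j = a^{(⌈j/2⌉ + ⌊j/2⌋ n_1^y n_2)·x} · u^{y·[j odd]} · v^j, where [j odd] is 1 if j is odd and 0 otherwise. -/
import Mathlib


namespace ZkDl

def n₁ (l : ℕ) : ℕ := 2 ^ (l - 1) + 1
def n₂ (l : ℕ) : ℕ := 2 ^ (l - 1) - 1

/-- The relations of the presentation
`⟨a, u, v | a^(2^l) = u^k = v^2 = 1, u a u⁻¹ = a^(n₁), v a v = a^(n₂), v u v = u⁻¹⟩`,
with generators `a = 0`, `u = 1`, `v = 2` in `Fin 3`. -/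
def rels (l k : ℕ) : Set (FreeGroup (Fin 3)) :=
  { FreeGroup.of 0 ^ 2 ^ l,
    FreeGroup.of 1 ^ k,
    FreeGroup.of 2 ^ 2,
    FreeGroup.of 1 * FreeGroup.of 0 * (FreeGroup.of 1)⁻¹ * (FreeGroup.of 0 ^ n₁ l)⁻¹,
    FreeGroup.of 2 * FreeGroup.of 0 * FreeGroup.of 2 * (FreeGroup.of 0 ^ n₂ l)⁻¹,
    FreeGroup.of 2 * FreeGroup.of 1 * FreeGroup.of 2 * FreeGroup.of 1 }

/-- The group `Z_{2^l} ⋊ D_k` given by the presentation above. -/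
abbrev G (l k : ℕ) : Type := PresentedGroup (rels l k)

def a (l k : ℕ) : G l k := PresentedGroup.of 0
def u (l k : ℕ) : G l k := PresentedGroup.of 1
def v (l k : ℕ) : G l k := PresentedGroup.of 2

lemma mk_rel {l k : ℕ} {r : FreeGroup (Fin 3)} (hr : r ∈ rels l k) :
    PresentedGroup.mk (rels l k) r = 1 :=
  (QuotientGroup.eq_one_iff r).mpr (Subgroup.subset_normalClosure hr)

lemma v_mul_v (l k : ℕ) : v l k * v l k = 1 := by
  have h := mk_rel (l := l) (k := k) (r := FreeGroup.of 2 ^ 2) (by simp [rels])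
  simpa [v, PresentedGroup.of, pow_two, map_pow, map_mul] using h

lemma v_inv (l k : ℕ) : (v l k)⁻¹ = v l k :=
  inv_eq_of_mul_eq_one_left (v_mul_v l k)

lemma uau (l k : ℕ) : u l k * a l k * (u l k)⁻¹ = a l k ^ n₁ l := by
  have h := mk_rel (l := l) (k := k)
    (r := FreeGroup.of 1 * FreeGroup.of 0 * (FreeGroup.of 1)⁻¹ * (FreeGroup.of 0 ^ n₁ l)⁻¹)
    (by simp [rels])
  simp only [map_mul, map_inv, map_pow] at h
  have h' : u l k * a l k * (u l k)⁻¹ * (a l k ^ n₁ l)⁻¹ = 1 := h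
  rw [mul_inv_eq_one] at h'
  exact h'

lemma vav (l k : ℕ) : v l k * a l k * (v l k)⁻¹ = a l k ^ n₂ l := by
  have h := mk_rel (l := l) (k := k)
    (r := FreeGroup.of 2 * FreeGroup.of 0 * FreeGroup.of 2 * (FreeGroup.of 0 ^ n₂ l)⁻¹)
    (by simp [rels])
  simp only [map_mul, map_inv, map_pow] at h
  have h' : v l k * a l k * v l k * (a l k ^ n₂ l)⁻¹ = 1 := h
  rw [mul_inv_eq_one] at h'
  rw [v_inv]
  exact h'

lemma vuv (l k : ℕ) : v l k * u l k * (v l k)⁻¹ = (u l k)⁻¹ := by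
  have h := mk_rel (l := l) (k := k)
    (r := FreeGroup.of 2 * FreeGroup.of 1 * FreeGroup.of 2 * FreeGroup.of 1)
    (by simp [rels])
  simp only [map_mul] at h
  have h' : v l k * u l k * v l k * u l k = 1 := h
  rw [v_inv]
  exact eq_inv_iff_mul_eq_one.mpr h'

lemma v_conj_azpow (l k : ℕ) (m : ℤ) :
    v l k * a l k ^ m * (v l k)⁻¹ = a l k ^ ((n₂ l : ℤ) * m) := by
  rw [← conj_zpow, vav, ← zpow_natCast, ← zpow_mul]

lemma u_conj_azpow (l k : ℕ) (y : ℕ) (m : ℤ) :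
    u l k ^ y * a l k ^ m * (u l k ^ y)⁻¹ = a l k ^ ((n₁ l : ℤ) ^ y * m) := by
  induction y generalizing m with
  | zero => simp
  | succ y ih =>
      have h1 : u l k * a l k ^ m * (u l k)⁻¹ = a l k ^ ((n₁ l : ℤ) * m) := by
        rw [← conj_zpow, uau, ← zpow_natCast, ← zpow_mul]
      calc u l k ^ (y + 1) * a l k ^ m * (u l k ^ (y + 1))⁻¹
          = u l k ^ y * (u l k * a l k ^ m * (u l k)⁻¹) * (u l k ^ y)⁻¹ := by
            rw [pow_succ]; group
        _ = a l k ^ ((n₁ l : ℤ) ^ (y + 1) * m) := by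
            rw [h1, ih]; ring_nf

lemma v_conj_upow (l k : ℕ) (y : ℕ) :
    v l k * u l k ^ y * (v l k)⁻¹ = (u l k ^ y)⁻¹ := by
  rw [← conj_pow, vuv, inv_pow]

end ZkDl

open ZkDl

theorem pow_of_asuyv (l k : ℕ) (hl : 3 ≤ l) (hk : 4 ∣ k) (x : ℤ) (y j : ℕ) :
    (a l k ^ x * u l k ^ y * v l k) ^ j =
      a l k ^ (((((j + 1) / 2 : ℕ) : ℤ) +
          (((j / 2 : ℕ) : ℤ)) * (n₁ l : ℤ) ^ y * (n₂ l : ℤ)) * x) *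
        u l k ^ (if Odd j then y else 0) * v l k ^ j := by
  induction j with
  | zero => simp
  | succ j ih =>
    have hv2 : v l k * v l k = 1 := v_mul_v l k
    have hveven : ∀ m : ℕ, v l k ^ (2 * m) = 1 := fun m => by
      rw [pow_mul, pow_two, hv2, one_pow]
    rw [pow_succ, ih]
    rcases Nat.even_or_odd j with ⟨m, hm⟩ | ⟨m, hm⟩
    · -- j = 2m even
      subst hm
      have hodd : ¬ Odd (m + m) := by rw [Nat.odd_iff]; omega
      have hodd' : Odd (m + m + 1) := by rw [Nat.odd_iff]; omega
      rw [if_neg hodd, if_pos hodd']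
      have hvj : v l k ^ (m + m) = 1 := by rw [show m + m = 2 * m by ring, hveven]
      have hvj1 : v l k ^ (m + m + 1) = v l k := by rw [pow_succ, hvj, one_mul]
      rw [hvj, hvj1, pow_zero]
      have hdiv1 : (((m + m + 1) / 2 : ℕ) : ℤ) = m := by omega
      have hdiv2 : (((m + m) / 2 : ℕ) : ℤ) = m := by omega
      have hdiv3 : (((m + m + 1 + 1) / 2 : ℕ) : ℤ) = m + 1 := by omega
      rw [hdiv1, hdiv2, hdiv3]
      calc a l k ^ (((m : ℤ) + (m : ℤ) * (n₁ l : ℤ) ^ y * (n₂ l : ℤ)) * x) * 1 * 1 *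
            (a l k ^ x * u l k ^ y * v l k)
          = a l k ^ (((m : ℤ) + (m : ℤ) * (n₁ l : ℤ) ^ y * (n₂ l : ℤ)) * x + x) *
              u l k ^ y * v l k := by rw [zpow_add]; group
        _ = _ := by ring_nf
    · -- j = 2m + 1 odd
      subst hm
      have hodd : Odd (2 * m + 1) := ⟨m, rfl⟩
      have hodd' : ¬ Odd (2 * m + 1 + 1) := by rw [Nat.odd_iff]; omega
      rw [if_pos hodd, if_neg hodd']
      have hvj : v l k ^ (2 * m + 1) = v l k := by rw [pow_succ, hveven, one_mul]
      have hvj1 : v l k ^ (2 * m + 1 + 1) = 1 := by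
        rw [show 2 * m + 1 + 1 = 2 * (m + 1) by ring, hveven]
      rw [hvj, hvj1, pow_zero]
      have hdiv1 : (((2 * m + 1 + 1) / 2 : ℕ) : ℤ) = m + 1 := by omega
      have hdiv2 : (((2 * m + 1) / 2 : ℕ) : ℤ) = m := by omega
      have hdiv3 : (((2 * m + 1 + 1 + 1) / 2 : ℕ) : ℤ) = m + 1 := by omega
      rw [hdiv1, hdiv2, hdiv3]
      have key : v l k * (a l k ^ x * u l k ^ y * v l k) =
          a l k ^ ((n₂ l : ℤ) * x) * (u l k ^ y)⁻¹ := by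
        calc v l k * (a l k ^ x * u l k ^ y * v l k)
            = (v l k * a l k ^ x * (v l k)⁻¹) * (v l k * u l k ^ y * (v l k)⁻¹) *
                (v l k * v l k) := by group
          _ = a l k ^ ((n₂ l : ℤ) * x) * (u l k ^ y)⁻¹ := by
              rw [v_conj_azpow, v_conj_upow, hv2, mul_one]
      calc a l k ^ ((((m : ℤ) + 1) + (m : ℤ) * (n₁ l : ℤ) ^ y * (n₂ l : ℤ)) * x) *
            u l k ^ y * v l k * (a l k ^ x * u l k ^ y * v l k)
          = a l k ^ ((((m : ℤ) + 1) + (m : ℤ) * (n₁ l : ℤ) ^ y * (n₂ l : ℤ)) * x) *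
              (u l k ^ y * (v l k * (a l k ^ x * u l k ^ y * v l k))) := by group
        _ = a l k ^ ((((m : ℤ) + 1) + (m : ℤ) * (n₁ l : ℤ) ^ y * (n₂ l : ℤ)) * x) *
              (u l k ^ y * a l k ^ ((n₂ l : ℤ) * x) * (u l k ^ y)⁻¹) := by
            rw [key]; group
        _ = a l k ^ ((((m : ℤ) + 1) + (m : ℤ) * (n₁ l : ℤ) ^ y * (n₂ l : ℤ)) * x) *
              a l k ^ ((n₁ l : ℤ) ^ y * ((n₂ l : ℤ) * x)) := by rw [u_conj_azpow]
        _ = a l k ^ ((((m : ℤ) + 1) + ((m : ℤ) + 1) * (n₁ l : ℤ) ^ y * (n₂ l : ℤ)) * x) *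
              1 * 1 := by rw [← zpow_add]; simp only [mul_one]; ring_nf
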